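/- arXiv:1012.5397 — 5 statements merged into one kernel-verified Lean document; each statement's English description precedes it below -/
import Mathlib

section
/- Let f : [a,b] → ℝ be differentiable on (a,b) with |f'(t)| ≤ M for all t ∈ [a,b]. Then for every x ∈ [a,b], |f(x) - (1/(b-a)) ∫_a^b f(t) dt| ≤ [1/4 + (x - (a+b)/2)²/(b-a)²] (b-a) M. -/
open intervalIntegral Set

theorem ostrowski (a b M : ℝ) (hab : a < b) (f f' : ℝ → ℝ)
    (hf : ContinuousOn f (Icc a b))
    (hderiv : ∀ t ∈ Ioo a b, HasDerivAt f (f' t) t)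
    (hbound : ∀ t ∈ Icc a b, |f' t| ≤ M) :
    ∀ x ∈ Icc a b,
      |f x - (1 / (b - a)) * ∫ t in a..b, f t| ≤
        (1 / 4 + (x - (a + b) / 2) ^ 2 / (b - a) ^ 2) * (b - a) * M := by
  intro x hx
  have hba : (0:ℝ) < b - a := by linarith
  have hM : 0 ≤ M := (abs_nonneg _).trans (hbound a ⟨le_refl a, hab.le⟩)
  have key : ∀ s t, s ∈ Icc a b → t ∈ Icc a b → s < t → |f t - f s| ≤ M * (t - s) := by
    intro s t hs ht hst
    obtain ⟨c, hc, hc'⟩ := exists_hasDerivAt_eq_slope f f' hst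
      (hf.mono (Icc_subset_Icc hs.1 ht.2))
      (fun y hy => hderiv y ⟨lt_of_le_of_lt hs.1 hy.1, lt_of_lt_of_le hy.2 ht.2⟩)
    have hceq : f t - f s = f' c * (t - s) := by
      rw [hc', div_mul_cancel₀ _ (sub_ne_zero.mpr hst.ne')]
    rw [hceq, abs_mul, abs_of_pos (by linarith : (0:ℝ) < t - s)]
    exact mul_le_mul_of_nonneg_right
      (hbound c ⟨hs.1.trans hc.1.le, hc.2.le.trans ht.2⟩) (by linarith)
  have lip : ∀ t ∈ Icc a b, |f x - f t| ≤ M * |x - t| := by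
    intro t ht
    rcases lt_trichotomy x t with h | h | h
    · rw [abs_sub_comm, abs_sub_comm x t, abs_of_pos (by linarith : (0:ℝ) < t - x)]
      exact key x t hx ht h
    · simp [h]
    · rw [abs_of_pos (by linarith : (0:ℝ) < x - t)]
      exact key t x ht hx h
  have hfi : IntervalIntegrable f MeasureTheory.volume a b :=
    (by rw [uIcc_of_le hab.le]; exact hf : ContinuousOn f (uIcc a b)).intervalIntegrable
  have hrw : f x - (1 / (b - a)) * ∫ t in a..b, f t
      = (1 / (b - a)) * ∫ t in a..b, (f x - f t) := by
    rw [intervalIntegral.integral_sub intervalIntegrable_const hfi,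
        intervalIntegral.integral_const, smul_eq_mul]
    field_simp
  have habsi : IntervalIntegrable (fun t => |f x - f t|) MeasureTheory.volume a b := by
    apply ContinuousOn.intervalIntegrable
    rw [uIcc_of_le hab.le]
    exact (continuousOn_const.sub hf).abs
  have hMi : IntervalIntegrable (fun t => M * |x - t|) MeasureTheory.volume a b :=
    (continuous_const.mul (continuous_const.sub continuous_id).abs).intervalIntegrable a b
  have habs : |∫ t in a..b, (f x - f t)| ≤ ∫ t in a..b, M * |x - t| := by
    calc |∫ t in a..b, (f x - f t)| ≤ ∫ t in a..b, |f x - f t| :=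
          intervalIntegral.abs_integral_le_integral_abs hab.le
    _ ≤ ∫ t in a..b, M * |x - t| :=
          intervalIntegral.integral_mono_on hab.le habsi hMi lip
  have h1 : (∫ t in a..x, |x - t|) = (x - a)^2 / 2 := by
    rw [intervalIntegral.integral_congr (g := fun t => x - t)
      (fun t ht => by
        rw [uIcc_of_le hx.1] at ht
        exact abs_of_nonneg (by linarith [ht.2]))]
    rw [intervalIntegral.integral_sub intervalIntegrable_const intervalIntegrable_id,
        intervalIntegral.integral_const, _root_.integral_id, smul_eq_mul]
    ring
  have h2 : (∫ t in x..b, |x - t|) = (b - x)^2 / 2 := by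
    rw [intervalIntegral.integral_congr (g := fun t => t - x)
      (fun t ht => by
        rw [uIcc_of_le hx.2] at ht
        rw [abs_sub_comm]
        exact abs_of_nonneg (by linarith [ht.1]))]
    rw [intervalIntegral.integral_sub intervalIntegrable_id intervalIntegrable_const,
        intervalIntegral.integral_const, _root_.integral_id, smul_eq_mul]
    ring
  have hcont : Continuous fun t : ℝ => |x - t| := by continuity
  have hsplit : (∫ t in a..b, |x - t|) = (x - a)^2 / 2 + (b - x)^2 / 2 := by
    rw [← intervalIntegral.integral_add_adjacent_intervals
      (hcont.intervalIntegrable a x) (hcont.intervalIntegrable x b), h1, h2]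
  have hint : (∫ t in a..b, M * |x - t|) = M * ((x - a)^2 / 2 + (b - x)^2 / 2) := by
    rw [intervalIntegral.integral_const_mul, hsplit]
  rw [hrw, abs_mul, abs_of_pos (by positivity : (0:ℝ) < 1 / (b - a))]
  calc 1 / (b - a) * |∫ t in a..b, (f x - f t)|
      ≤ 1 / (b - a) * (M * ((x - a)^2 / 2 + (b - x)^2 / 2)) := by
        apply mul_le_mul_of_nonneg_left _ (by positivity)
        rw [← hint]; exact habs
    _ = (1 / 4 + (x - (a + b) / 2) ^ 2 / (b - a) ^ 2) * (b - a) * M := by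
        field_simp
        ring
end

section
/- Let f : [a,b] → ℝ be differentiable with γ ≤ f'(t) ≤ Γ for all t ∈ [a,b], and set S = (f(b)-f(a))/(b-a). Then for every x ∈ [a,b], |f(x) - (x - (a+b)/2)·S - (1/(b-a)) ∫_a^b f(t) dt| ≤ ((b-a)/2)(S - γ). -/
open intervalIntegral Set

theorem ujevic_lower (a b γ Γ : ℝ) (hab : a < b) (f f' : ℝ → ℝ)
    (hderiv : ∀ t ∈ Icc a b, HasDerivAt f (f' t) t)
    (hγ : ∀ t ∈ Icc a b, γ ≤ f' t) (hΓ : ∀ t ∈ Icc a b, f' t ≤ Γ) :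
    ∀ x ∈ Icc a b,
      |f x - (x - (a + b) / 2) * ((f b - f a) / (b - a)) -
          (1 / (b - a)) * ∫ t in a..b, f t| ≤
        ((b - a) / 2) * ((f b - f a) / (b - a) - γ) := by
  intro x hx
  obtain ⟨hax, hxb⟩ := hx
  have hba : (0:ℝ) < b - a := by linarith
  -- integrability of f'
  have hIcc : MeasureTheory.IntegrableOn f' (Icc a b) := by
    have h1 : Set.EqOn f' (deriv f) (Icc a b) := fun t ht => ((hderiv t ht).deriv).symm
    rw [MeasureTheory.integrableOn_congr_fun h1 measurableSet_Icc]
    apply MeasureTheory.Measure.integrableOn_of_bounded (M := max |γ| |Γ|)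
      measure_Icc_lt_top.ne (measurable_deriv f).aestronglyMeasurable
    rw [MeasureTheory.ae_restrict_iff' measurableSet_Icc]
    filter_upwards with t ht
    have h2 := (hderiv t ht).deriv
    rw [Real.norm_eq_abs, h2, abs_le]
    constructor
    · have h3 := hγ t ht
      have h4 := neg_abs_le γ
      have h5 := le_max_left |γ| |Γ|
      linarith
    · have h3 := hΓ t ht
      have h4 := le_abs_self Γ
      have h5 := le_max_right |γ| |Γ|
      linarith
  have hint : ∀ c d : ℝ, a ≤ c → c ≤ d → d ≤ b → IntervalIntegrable f' MeasureTheory.volume c d := by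
    intro c d h1 h2 h3
    rw [intervalIntegrable_iff_integrableOn_Icc_of_le h2]
    exact hIcc.mono_set (Icc_subset_Icc h1 h3)
  -- continuity of f
  have hfc : ContinuousOn f (Icc a b) := fun t ht => ((hderiv t ht).continuousAt).continuousWithinAt
  have hfint : ∀ c d : ℝ, a ≤ c → c ≤ d → d ≤ b → IntervalIntegrable f MeasureTheory.volume c d := by
    intro c d h1 h2 h3
    exact (hfc.mono (by rw [uIcc_of_le h2]; exact Icc_subset_Icc h1 h3)).intervalIntegrable
  -- integration by parts on [a,x]
  have hp1 : ∫ t in a..x, (t - a) * f' t = (x - a) * f x - ∫ t in a..x, f t := by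
    have h := integral_mul_deriv_eq_deriv_mul (u := fun t => t - a) (u' := fun _ => (1:ℝ))
      (v := f) (v' := f')
      (fun t _ => (hasDerivAt_id t).sub_const a)
      (fun t ht => hderiv t (by rw [uIcc_of_le hax] at ht; exact Icc_subset_Icc le_rfl hxb ht))
      intervalIntegrable_const (hint a x le_rfl hax hxb)
    simp only [one_mul, sub_self, zero_mul, sub_zero] at h
    linarith [h]
  -- integration by parts on [x,b]
  have hp2 : ∫ t in x..b, (t - b) * f' t = (b - x) * f x - ∫ t in x..b, f t := by
    have h := integral_mul_deriv_eq_deriv_mul (u := fun t => t - b) (u' := fun _ => (1:ℝ))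
      (v := f) (v' := f')
      (fun t _ => (hasDerivAt_id t).sub_const b)
      (fun t ht => hderiv t (by rw [uIcc_of_le hxb] at ht; exact Icc_subset_Icc hax le_rfl ht))
      intervalIntegrable_const (hint x b hax hxb le_rfl)
    simp only [one_mul, sub_self, zero_mul, zero_sub] at h
    linarith [h]
  -- elementary integrals
  have hka : ∫ t in a..x, (t - a) = (x - a)^2 / 2 := by
    rw [intervalIntegral.integral_sub intervalIntegral.intervalIntegrable_id
      intervalIntegrable_const, integral_id, integral_const]
    simp only [smul_eq_mul]
    ring
  have hkb : ∫ t in x..b, (t - b) = -((b - x)^2 / 2) := by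
    rw [intervalIntegral.integral_sub intervalIntegral.intervalIntegrable_id
      intervalIntegrable_const, integral_id, integral_const]
    simp only [smul_eq_mul]
    ring
  -- integrability of the pieces
  have hsub1 : IntervalIntegrable (fun t => f' t - γ) MeasureTheory.volume a x :=
    (hint a x le_rfl hax hxb).sub intervalIntegrable_const
  have hsub2 : IntervalIntegrable (fun t => f' t - γ) MeasureTheory.volume x b :=
    (hint x b hax hxb le_rfl).sub intervalIntegrable_const
  have hsub0 : IntervalIntegrable (fun t => f' t - γ) MeasureTheory.volume a b :=
    (hint a b le_rfl hab.le le_rfl).sub intervalIntegrable_const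
  have hg1 : IntervalIntegrable (fun t => (t - a) * (f' t - γ)) MeasureTheory.volume a x :=
    hsub1.continuousOn_mul ((continuous_id.sub continuous_const).continuousOn)
  have hg2 : IntervalIntegrable (fun t => (t - b) * (f' t - γ)) MeasureTheory.volume x b :=
    hsub2.continuousOn_mul ((continuous_id.sub continuous_const).continuousOn)
  -- definitions
  set A1 := ∫ t in a..x, (t - a) * (f' t - γ) with hA1def
  set A2 := ∫ t in x..b, (t - b) * (f' t - γ) with hA2def
  set I := ∫ t in a..b, (f' t - γ) with hIdef
  -- value of I
  have hftc : ∫ t in a..b, f' t = f b - f a :=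
    integral_eq_sub_of_hasDerivAt
      (fun t ht => hderiv t (by rwa [uIcc_of_le hab.le] at ht))
      (hint a b le_rfl hab.le le_rfl)
  have hI : I = f b - f a - γ * (b - a) := by
    rw [hIdef, intervalIntegral.integral_sub (hint a b le_rfl hab.le le_rfl)
      intervalIntegrable_const, hftc, integral_const]
    simp only [smul_eq_mul]
    ring
  -- A1 identity
  have hA1 : A1 = (x - a) * f x - (∫ t in a..x, f t) - γ * ((x - a)^2 / 2) := by
    rw [hA1def]
    have : ∀ t : ℝ, (t - a) * (f' t - γ) = (t - a) * f' t - γ * (t - a) := fun t => by ring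
    simp only [this]
    have hprod1 : IntervalIntegrable (fun t : ℝ => (t - a) * f' t) MeasureTheory.volume a x :=
      (hint a x le_rfl hax hxb).continuousOn_mul (Continuous.continuousOn (by fun_prop))
    have hc1 : IntervalIntegrable (fun t : ℝ => γ * (t - a)) MeasureTheory.volume a x :=
      Continuous.intervalIntegrable (by fun_prop) a x
    rw [intervalIntegral.integral_sub hprod1 hc1, hp1, intervalIntegral.integral_const_mul, hka]
  have hA2 : A2 = (b - x) * f x - (∫ t in x..b, f t) + γ * ((b - x)^2 / 2) := by
    rw [hA2def]
    have : ∀ t : ℝ, (t - b) * (f' t - γ) = (t - b) * f' t - γ * (t - b) := fun t => by ring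
    simp only [this]
    have hprod2 : IntervalIntegrable (fun t : ℝ => (t - b) * f' t) MeasureTheory.volume x b :=
      (hint x b hax hxb le_rfl).continuousOn_mul (Continuous.continuousOn (by fun_prop))
    have hc2 : IntervalIntegrable (fun t : ℝ => γ * (t - b)) MeasureTheory.volume x b :=
      Continuous.intervalIntegrable (by fun_prop) x b
    rw [intervalIntegral.integral_sub hprod2 hc2, hp2, intervalIntegral.integral_const_mul, hkb]
    ring
  -- splitting ∫ f over a..x, x..b
  have hsplit : (∫ t in a..x, f t) + (∫ t in x..b, f t) = ∫ t in a..b, f t :=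
    integral_add_adjacent_intervals (hfint a x le_rfl hax hxb) (hfint x b hax hxb le_rfl)
  -- splitting I
  have hIsplit : (∫ t in a..x, (f' t - γ)) + (∫ t in x..b, (f' t - γ)) = I :=
    integral_add_adjacent_intervals hsub1 hsub2
  -- nonnegativity facts
  have hax_nonneg : ∀ t ∈ Icc a x, (0:ℝ) ≤ f' t - γ := fun t ht => by
    have := hγ t (Icc_subset_Icc le_rfl hxb ht); linarith
  have hxb_nonneg : ∀ t ∈ Icc x b, (0:ℝ) ≤ f' t - γ := fun t ht => by
    have := hγ t (Icc_subset_Icc hax le_rfl ht); linarith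
  have hI1nonneg : 0 ≤ ∫ t in a..x, (f' t - γ) :=
    intervalIntegral.integral_nonneg hax hax_nonneg
  have hI2nonneg : 0 ≤ ∫ t in x..b, (f' t - γ) :=
    intervalIntegral.integral_nonneg hxb hxb_nonneg
  -- upper bound: A1 + A2 ≤ (x - a) * I
  have hub : A1 + A2 ≤ (x - a) * I := by
    have h1 : A1 ≤ (x - a) * ∫ t in a..x, (f' t - γ) := by
      rw [← intervalIntegral.integral_const_mul]
      apply intervalIntegral.integral_mono_on hax hg1
        (hsub1.continuousOn_mul continuous_const.continuousOn)
      intro t ht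
      exact mul_le_mul_of_nonneg_right (by linarith [ht.2]) (hax_nonneg t ht)
    have h2 : A2 ≤ 0 := by
      rw [show (0:ℝ) = ∫ t in x..b, (0:ℝ) by simp]
      apply intervalIntegral.integral_mono_on hxb hg2 intervalIntegrable_const
      intro t ht
      exact mul_nonpos_of_nonpos_of_nonneg (by linarith [ht.2]) (hxb_nonneg t ht)
    have h3 : (x - a) * (∫ t in a..x, (f' t - γ)) ≤ (x - a) * I := by
      apply mul_le_mul_of_nonneg_left _ (by linarith)
      linarith [hIsplit, hI2nonneg]
    linarith
  -- lower bound: (x - b) * I ≤ A1 + A2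
  have hlb : (x - b) * I ≤ A1 + A2 := by
    have h1 : 0 ≤ A1 := by
      apply intervalIntegral.integral_nonneg hax
      intro t ht
      exact mul_nonneg (by linarith [ht.1]) (hax_nonneg t ht)
    have h2 : (x - b) * (∫ t in x..b, (f' t - γ)) ≤ A2 := by
      rw [← intervalIntegral.integral_const_mul]
      apply intervalIntegral.integral_mono_on hxb
        (hsub2.continuousOn_mul continuous_const.continuousOn) hg2
      intro t ht
      exact mul_le_mul_of_nonneg_right (by linarith [ht.1]) (hxb_nonneg t ht)
    have h3 : (x - b) * I ≤ (x - b) * (∫ t in x..b, (f' t - γ)) := by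
      apply mul_le_mul_of_nonpos_left _ (by linarith)
      linarith [hIsplit, hI1nonneg]
    linarith
  -- rewrite the target quantity
  have hE : f x - (x - (a + b) / 2) * ((f b - f a) / (b - a)) -
      (1 / (b - a)) * ∫ t in a..b, f t
      = (A1 + A2 - (x - (a + b) / 2) * I) / (b - a) := by
    rw [hA1, hA2, hI, ← hsplit]
    field_simp
    ring
  rw [hE, abs_le]
  constructor
  · rw [le_div_iff₀ hba]
    have hr : (x - b) * I - (x - (a + b) / 2) * I = -(((b - a) / 2) * I) := by ring
    have : -(((b - a) / 2) * I) ≤ A1 + A2 - (x - (a + b) / 2) * I := by linarith [hlb, hr]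
    calc -(((b - a) / 2) * ((f b - f a) / (b - a) - γ)) * (b - a)
        = -(((b - a) / 2) * I) := by rw [hI]; field_simp
      _ ≤ _ := this
  · rw [div_le_iff₀ hba]
    have hr : (x - a) * I - (x - (a + b) / 2) * I = ((b - a) / 2) * I := by ring
    have : A1 + A2 - (x - (a + b) / 2) * I ≤ ((b - a) / 2) * I := by linarith [hub, hr]
    calc A1 + A2 - (x - (a + b) / 2) * I ≤ ((b - a) / 2) * I := this
      _ = ((b - a) / 2) * ((f b - f a) / (b - a) - γ) * (b - a) := by
          rw [hI]; field_simp
end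

section
/- Let f : [a,b] → ℝ be differentiable with γ ≤ f'(t) ≤ Γ for all t ∈ [a,b], and set S = (f(b)-f(a))/(b-a). Then for every x ∈ [a,b], |f(x) - (x - (a+b)/2)·S - (1/(b-a)) ∫_a^b f(t) dt| ≤ ((b-a)/2)(Γ - S). -/
open intervalIntegral Set MeasureTheory

theorem ujevic_upper (a b γ Γ : ℝ) (hab : a < b) (f f' : ℝ → ℝ)
    (hderiv : ∀ t ∈ Icc a b, HasDerivAt f (f' t) t)
    (hγ : ∀ t ∈ Icc a b, γ ≤ f' t) (hΓ : ∀ t ∈ Icc a b, f' t ≤ Γ) :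
    ∀ x ∈ Icc a b,
      |f x - (x - (a + b) / 2) * ((f b - f a) / (b - a)) -
          (1 / (b - a)) * ∫ t in a..b, f t| ≤
        ((b - a) / 2) * (Γ - (f b - f a) / (b - a)) := by
  intro x hx
  obtain ⟨hax, hxb⟩ := hx
  have hab' : a ≤ b := hab.le
  have hba : (0:ℝ) < b - a := by linarith
  have hbane : b - a ≠ 0 := ne_of_gt hba
  set d : ℝ := (b - a) / 2 with hdd
  have haI : a ∈ Icc a b := ⟨le_refl a, hab'⟩
  have hbI : b ∈ Icc a b := ⟨hab', le_refl b⟩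
  have hxI : x ∈ Icc a b := ⟨hax, hxb⟩
  -- integrability of f'
  have hderiv' : EqOn (deriv f) f' (Icc a b) := fun t ht => (hderiv t ht).deriv
  have hIntOn : IntegrableOn f' (Icc a b) volume := by
    have h1 : IntegrableOn (deriv f) (Icc a b) volume := by
      apply Integrable.mono' (g := fun _ => max |γ| |Γ|)
        (integrableOn_const measure_Icc_lt_top.ne)
        (measurable_deriv f).aestronglyMeasurable
      filter_upwards [MeasureTheory.ae_restrict_mem measurableSet_Icc] with t ht
      rw [Real.norm_eq_abs, hderiv' ht]
      rcases abs_cases (f' t) with ⟨h, _⟩ | ⟨h, _⟩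
      · rw [h] at *
        exact le_trans (le_trans (hΓ t ht) (le_abs_self Γ)) (le_max_right _ _)
      · rw [h]
        exact le_trans (le_trans (by linarith [hγ t ht] : -f' t ≤ -γ) (neg_le_abs γ))
          (le_max_left _ _)
    exact h1.congr_fun hderiv' measurableSet_Icc
  have hII : ∀ c e : ℝ, c ∈ Icc a b → e ∈ Icc a b → IntervalIntegrable f' volume c e := by
    intro c e hc he
    rw [intervalIntegrable_iff]
    exact hIntOn.mono_set (uIoc_subset_uIcc.trans (uIcc_subset_Icc hc he))
  have hcf : ContinuousOn f (Icc a b) :=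
    fun t ht => (hderiv t ht).continuousAt.continuousWithinAt
  have hfint : ∀ c e : ℝ, c ∈ Icc a b → e ∈ Icc a b → IntervalIntegrable f volume c e :=
    fun c e hc he => (hcf.mono (uIcc_subset_Icc hc he)).intervalIntegrable
  -- FTC
  have hftc : ∫ t in a..b, f' t = f b - f a := by
    apply integral_eq_sub_of_hasDerivAt _ (hII a b haI hbI)
    intro t ht
    exact hderiv t (by rwa [uIcc_of_le hab'] at ht)
  -- integration by parts on [a,x]
  have E1 : ∫ t in a..x, (t - x + d) * f' t
      = d * f x - (a - x + d) * f a - ∫ t in a..x, f t := by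
    have h := integral_mul_deriv_eq_deriv_mul
      (u := fun t => t - x + d) (u' := fun _ => (1:ℝ)) (v := f) (v' := f') (a := a) (b := x)
      (fun t _ => by simpa using ((hasDerivAt_id t).sub_const x).add_const d)
      (fun t ht => hderiv t (uIcc_subset_Icc haI hxI ht))
      intervalIntegrable_const (hII a x haI hxI)
    simpa using h
  have E2 : ∫ t in x..b, (t - x - d) * f' t
      = (b - x - d) * f b + d * f x - ∫ t in x..b, f t := by
    have h := integral_mul_deriv_eq_deriv_mul
      (u := fun t => t - x - d) (u' := fun _ => (1:ℝ)) (v := f) (v' := f') (a := x) (b := b)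
      (fun t _ => by simpa using ((hasDerivAt_id t).sub_const x).sub_const d)
      (fun t ht => hderiv t (uIcc_subset_Icc hxI hbI ht))
      intervalIntegrable_const (hII x b hxI hbI)
    simp only [one_mul, sub_self, zero_sub] at h
    rw [h]; ring
  -- kernel integrals
  have J1 : ∫ t in a..x, (t - x + d) = (x^2 - a^2)/2 - (x - d) * (x - a) := by
    have : (fun t : ℝ => t - x + d) = fun t : ℝ => t - (x - d) := by funext t; ring
    rw [this, intervalIntegral.integral_sub intervalIntegrable_id intervalIntegrable_const,
      integral_id, intervalIntegral.integral_const, smul_eq_mul]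
    ring
  have J2 : ∫ t in x..b, (t - x - d) = (b^2 - x^2)/2 - (x + d) * (b - x) := by
    have : (fun t : ℝ => t - x - d) = fun t : ℝ => t - (x + d) := by funext t; ring
    rw [this, intervalIntegral.integral_sub intervalIntegrable_id intervalIntegrable_const,
      integral_id, intervalIntegral.integral_const, smul_eq_mul]
    ring
  have E3 : ∫ t in a..x, (t - x + d) * (f' t - Γ)
      = (∫ t in a..x, (t - x + d) * f' t) - Γ * ((x^2 - a^2)/2 - (x - d) * (x - a)) := by
    have hmul : IntervalIntegrable (fun t => (t - x + d) * f' t) volume a x :=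
      (hII a x haI hxI).continuousOn_mul (by fun_prop)
    have hker : IntervalIntegrable (fun t : ℝ => (t - x + d) * Γ) volume a x := by
      apply ContinuousOn.intervalIntegrable; fun_prop
    have : ∀ t : ℝ, (t - x + d) * (f' t - Γ) = (t - x + d) * f' t - (t - x + d) * Γ := by
      intro t; ring
    simp only [this]
    rw [intervalIntegral.integral_sub hmul hker, ← J1,
      show (fun t : ℝ => (t - x + d) * Γ) = fun t : ℝ => Γ * (t - x + d) by funext t; ring,
      intervalIntegral.integral_const_mul]
  have E4 : ∫ t in x..b, (t - x - d) * (f' t - Γ)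
      = (∫ t in x..b, (t - x - d) * f' t) - Γ * ((b^2 - x^2)/2 - (x + d) * (b - x)) := by
    have hmul : IntervalIntegrable (fun t => (t - x - d) * f' t) volume x b :=
      (hII x b hxI hbI).continuousOn_mul (by fun_prop)
    have hker : IntervalIntegrable (fun t : ℝ => (t - x - d) * Γ) volume x b := by
      apply ContinuousOn.intervalIntegrable; fun_prop
    have : ∀ t : ℝ, (t - x - d) * (f' t - Γ) = (t - x - d) * f' t - (t - x - d) * Γ := by
      intro t; ring
    simp only [this]
    rw [intervalIntegral.integral_sub hmul hker, ← J2,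
      show (fun t : ℝ => (t - x - d) * Γ) = fun t : ℝ => Γ * (t - x - d) by funext t; ring,
      intervalIntegral.integral_const_mul]
  have E5 : (∫ t in a..x, f t) + ∫ t in x..b, f t = ∫ t in a..b, f t :=
    integral_add_adjacent_intervals (hfint a x haI hxI) (hfint x b hxI hbI)
  -- key identity
  have key : (b - a) * (f x - (x - (a + b) / 2) * ((f b - f a) / (b - a)) -
      (1 / (b - a)) * ∫ t in a..b, f t)
      = (∫ t in a..x, (t - x + d) * (f' t - Γ)) + ∫ t in x..b, (t - x - d) * (f' t - Γ) := by
    rw [E3, E4, E1, E2, ← E5, hdd]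
    field_simp
    ring
  -- bounds
  have hptw1 : ∀ t ∈ Icc a x, |(t - x + d) * (f' t - Γ)| ≤ d * (Γ - f' t) := by
    intro t ht
    have htI : t ∈ Icc a b := ⟨ht.1, le_trans ht.2 hxb⟩
    have h1 : |t - x + d| ≤ d := by
      rw [abs_le]; constructor <;> [skip; skip] <;>
        simp only [hdd] <;> [linarith [ht.1, hxb]; linarith [ht.2]]
    have h2 : |f' t - Γ| = Γ - f' t := by
      rw [abs_of_nonpos (by linarith [hΓ t htI])]; ring
    calc |(t - x + d) * (f' t - Γ)| = |t - x + d| * |f' t - Γ| := abs_mul _ _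
      _ ≤ d * (Γ - f' t) := by
          rw [h2]; exact mul_le_mul_of_nonneg_right h1 (by linarith [hΓ t htI])
  have hptw2 : ∀ t ∈ Icc x b, |(t - x - d) * (f' t - Γ)| ≤ d * (Γ - f' t) := by
    intro t ht
    have htI : t ∈ Icc a b := ⟨le_trans hax ht.1, ht.2⟩
    have h1 : |t - x - d| ≤ d := by
      rw [abs_le]; constructor <;> [skip; skip] <;>
        simp only [hdd] <;> [linarith [ht.1]; linarith [ht.2, hax]]
    have h2 : |f' t - Γ| = Γ - f' t := by
      rw [abs_of_nonpos (by linarith [hΓ t htI])]; ring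
    calc |(t - x - d) * (f' t - Γ)| = |t - x - d| * |f' t - Γ| := abs_mul _ _
      _ ≤ d * (Γ - f' t) := by
          rw [h2]; exact mul_le_mul_of_nonneg_right h1 (by linarith [hΓ t htI])
  have hΓint1 : IntervalIntegrable (fun t => Γ - f' t) volume a x :=
    intervalIntegrable_const.sub (hII a x haI hxI)
  have hΓint2 : IntervalIntegrable (fun t => Γ - f' t) volume x b :=
    intervalIntegrable_const.sub (hII x b hxI hbI)
  have hmul1 : IntervalIntegrable (fun t => (t - x + d) * (f' t - Γ)) volume a x :=
    ((hII a x haI hxI).sub intervalIntegrable_const).continuousOn_mul (by fun_prop)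
  have hmul2 : IntervalIntegrable (fun t => (t - x - d) * (f' t - Γ)) volume x b :=
    ((hII x b hxI hbI).sub intervalIntegrable_const).continuousOn_mul (by fun_prop)
  have B1 : |∫ t in a..x, (t - x + d) * (f' t - Γ)| ≤ d * ∫ t in a..x, (Γ - f' t) := by
    calc |∫ t in a..x, (t - x + d) * (f' t - Γ)|
        ≤ ∫ t in a..x, |(t - x + d) * (f' t - Γ)| :=
          intervalIntegral.abs_integral_le_integral_abs hax
      _ ≤ ∫ t in a..x, d * (Γ - f' t) := by
          apply intervalIntegral.integral_mono_on hax hmul1.abs (hΓint1.const_mul d) hptw1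
      _ = d * ∫ t in a..x, (Γ - f' t) := intervalIntegral.integral_const_mul _ _
  have B2 : |∫ t in x..b, (t - x - d) * (f' t - Γ)| ≤ d * ∫ t in x..b, (Γ - f' t) := by
    calc |∫ t in x..b, (t - x - d) * (f' t - Γ)|
        ≤ ∫ t in x..b, |(t - x - d) * (f' t - Γ)| :=
          intervalIntegral.abs_integral_le_integral_abs hxb
      _ ≤ ∫ t in x..b, d * (Γ - f' t) := by
          apply intervalIntegral.integral_mono_on hxb hmul2.abs (hΓint2.const_mul d) hptw2
      _ = d * ∫ t in x..b, (Γ - f' t) := intervalIntegral.integral_const_mul _ _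
  have hsum : (∫ t in a..x, (Γ - f' t)) + ∫ t in x..b, (Γ - f' t)
      = Γ * (b - a) - (f b - f a) := by
    rw [integral_add_adjacent_intervals hΓint1 hΓint2,
      intervalIntegral.integral_sub intervalIntegrable_const (hII a b haI hbI),
      intervalIntegral.integral_const, hftc, smul_eq_mul]
    ring
  have hnn1 : 0 ≤ ∫ t in a..x, (Γ - f' t) := by
    apply intervalIntegral.integral_nonneg hax
    intro t ht; linarith [hΓ t ⟨ht.1, le_trans ht.2 hxb⟩]
  have hnn2 : 0 ≤ ∫ t in x..b, (Γ - f' t) := by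
    apply intervalIntegral.integral_nonneg hxb
    intro t ht; linarith [hΓ t ⟨le_trans hax ht.1, ht.2⟩]
  -- combine
  have hmain : (b - a) * |f x - (x - (a + b) / 2) * ((f b - f a) / (b - a)) -
      (1 / (b - a)) * ∫ t in a..b, f t| ≤ d * (Γ * (b - a) - (f b - f a)) := by
    have habs : (b - a) * |f x - (x - (a + b) / 2) * ((f b - f a) / (b - a)) -
        (1 / (b - a)) * ∫ t in a..b, f t|
        = |(b - a) * (f x - (x - (a + b) / 2) * ((f b - f a) / (b - a)) -
        (1 / (b - a)) * ∫ t in a..b, f t)| := by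
      rw [abs_mul, abs_of_pos hba]
    rw [habs, key]
    calc |(∫ t in a..x, (t - x + d) * (f' t - Γ)) + ∫ t in x..b, (t - x - d) * (f' t - Γ)|
        ≤ |∫ t in a..x, (t - x + d) * (f' t - Γ)| + |∫ t in x..b, (t - x - d) * (f' t - Γ)| :=
          abs_add_le _ _
      _ ≤ d * (∫ t in a..x, (Γ - f' t)) + d * ∫ t in x..b, (Γ - f' t) := add_le_add B1 B2
      _ = d * (Γ * (b - a) - (f b - f a)) := by rw [← mul_add, hsum]
  rw [← mul_le_mul_iff_right₀ hba]
  calc (b - a) * |f x - (x - (a + b) / 2) * ((f b - f a) / (b - a)) -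
        (1 / (b - a)) * ∫ t in a..b, f t|
      ≤ d * (Γ * (b - a) - (f b - f a)) := hmain
    _ = (b - a) * ((b - a) / 2 * (Γ - (f b - f a) / (b - a))) := by
        rw [hdd]; field_simp
end

section
/- Let f : [a,b] → ℝ be twice continuously differentiable with f'' ∈ L²[a,b]. Then for every x ∈ [a,b], |f(x) - (x - (a+b)/2)·(f(b)-f(a))/(b-a) - (1/(b-a)) ∫_a^b f(t) dt| ≤ (b-a)^(3/2)/(2π√3) · ‖f''‖_{L²[a,b]}. -/
open intervalIntegral Set Real

set_option maxHeartbeats 2000000 in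
theorem ujevic_L2 (a b : ℝ) (hab : a < b) (f f' f'' : ℝ → ℝ)
    (hderiv : ∀ t ∈ Icc a b, HasDerivAt f (f' t) t)
    (hderiv' : ∀ t ∈ Icc a b, HasDerivAt f' (f'' t) t)
    (hcont : ContinuousOn f'' (Icc a b)) :
    ∀ x ∈ Icc a b,
      |f x - (x - (a + b) / 2) * ((f b - f a) / (b - a)) -
          (1 / (b - a)) * ∫ t in a..b, f t| ≤
        (b - a) ^ ((3 : ℝ) / 2) / (2 * π * Real.sqrt 3) *
          (∫ t in a..b, (f'' t) ^ 2) ^ ((1 : ℝ) / 2) := by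
  rintro x ⟨hax, hxb⟩
  have hba : (0:ℝ) < b - a := sub_pos.mpr hab
  -- the two polynomial kernels
  set u : ℝ → ℝ := fun t => (t - a) * (t + b - 2*x) / 2 with hu_def
  set v : ℝ → ℝ := fun t => (t - b) * (t + a - 2*x) / 2 with hv_def
  have hu' : ∀ t, HasDerivAt u (t - x + (b-a)/2) t := fun t => by
    have h := (((hasDerivAt_id t).sub_const a).mul
      (((hasDerivAt_id t).add_const b).sub_const (2*x))).div_const 2
    simp only [id_eq] at h
    exact h.congr_deriv (by ring)
  have hv' : ∀ t, HasDerivAt v (t - x - (b-a)/2) t := fun t => by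
    have h := (((hasDerivAt_id t).sub_const b).mul
      (((hasDerivAt_id t).add_const a).sub_const (2*x))).div_const 2
    simp only [id_eq] at h
    exact h.congr_deriv (by ring)
  have hucont : Continuous u := by fun_prop
  have hvcont : Continuous v := by fun_prop
  -- continuity of f, f' on [a,b]
  have hf'c : ContinuousOn f' (Icc a b) := fun t ht =>
    ((hderiv' t ht).continuousAt).continuousWithinAt
  have hfc : ContinuousOn f (Icc a b) := fun t ht =>
    ((hderiv t ht).continuousAt).continuousWithinAt
  have hsub1 : uIcc a x ⊆ Icc a b := by
    rw [uIcc_of_le hax]; exact Icc_subset_Icc le_rfl hxb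
  have hsub2 : uIcc x b ⊆ Icc a b := by
    rw [uIcc_of_le hxb]; exact Icc_subset_Icc hax le_rfl
  have hsub : uIcc a b ⊆ Icc a b := by rw [uIcc_of_le hab.le]
  -- integrabilities
  have hif''1 : IntervalIntegrable f'' MeasureTheory.volume a x :=
    (hcont.mono hsub1).intervalIntegrable
  have hif''2 : IntervalIntegrable f'' MeasureTheory.volume x b :=
    (hcont.mono hsub2).intervalIntegrable
  have hif'1 : IntervalIntegrable f' MeasureTheory.volume a x :=
    (hf'c.mono hsub1).intervalIntegrable
  have hif'2 : IntervalIntegrable f' MeasureTheory.volume x b :=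
    (hf'c.mono hsub2).intervalIntegrable
  have hif1 : IntervalIntegrable f MeasureTheory.volume a x :=
    (hfc.mono hsub1).intervalIntegrable
  have hif2 : IntervalIntegrable f MeasureTheory.volume x b :=
    (hfc.mono hsub2).intervalIntegrable
  -- integration by parts on [a,x]
  have I1 : ∫ t in a..x, u t * f'' t
      = u x * f' x - u a * f' a - ∫ t in a..x, (t - x + (b-a)/2) * f' t :=
    integral_mul_deriv_eq_deriv_mul (fun t _ => hu' t)
      (fun t ht => hderiv' t (hsub1 ht))
      ((by fun_prop : Continuous fun t : ℝ => t - x + (b-a)/2).intervalIntegrable a x) hif''1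
  have I2 : ∫ t in a..x, (t - x + (b-a)/2) * f' t
      = (x - x + (b-a)/2) * f x - (a - x + (b-a)/2) * f a - ∫ t in a..x, 1 * f t :=
    integral_mul_deriv_eq_deriv_mul
      (fun t _ => ((hasDerivAt_id t).sub_const x).add_const ((b-a)/2))
      (fun t ht => hderiv t (hsub1 ht))
      (continuous_const.intervalIntegrable a x) hif'1
  -- integration by parts on [x,b]
  have J1 : ∫ t in x..b, v t * f'' t
      = v b * f' b - v x * f' x - ∫ t in x..b, (t - x - (b-a)/2) * f' t :=
    integral_mul_deriv_eq_deriv_mul (fun t _ => hv' t)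
      (fun t ht => hderiv' t (hsub2 ht))
      ((by fun_prop : Continuous fun t : ℝ => t - x - (b-a)/2).intervalIntegrable x b) hif''2
  have J2 : ∫ t in x..b, (t - x - (b-a)/2) * f' t
      = (b - x - (b-a)/2) * f b - (x - x - (b-a)/2) * f x - ∫ t in x..b, 1 * f t :=
    integral_mul_deriv_eq_deriv_mul
      (fun t _ => ((hasDerivAt_id t).sub_const x).sub_const ((b-a)/2))
      (fun t ht => hderiv t (hsub2 ht))
      (continuous_const.intervalIntegrable x b) hif'2
  -- the glued kernel
  set G : ℝ → ℝ := fun t => if t ≤ x then u t else v t with hG_def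
  have hGcont : Continuous G := by
    refine Continuous.if_le hucont hvcont continuous_id continuous_const ?_
    intro t ht
    subst ht
    simp only [u, v]; ring
  have hiGf : IntervalIntegrable (fun t => G t * f'' t) MeasureTheory.volume a b :=
    ((hGcont.continuousOn).mul (hcont.mono hsub)).intervalIntegrable
  have hiGf1 : IntervalIntegrable (fun t => G t * f'' t) MeasureTheory.volume a x :=
    ((hGcont.continuousOn).mul (hcont.mono hsub1)).intervalIntegrable
  have hiGf2 : IntervalIntegrable (fun t => G t * f'' t) MeasureTheory.volume x b :=
    ((hGcont.continuousOn).mul (hcont.mono hsub2)).intervalIntegrable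
  set B : ℝ := ∫ t in a..b, G t * f'' t with hB_def
  have e1 : ∫ t in a..x, G t * f'' t = ∫ t in a..x, u t * f'' t := by
    refine integral_congr fun t ht => ?_
    rw [uIcc_of_le hax] at ht
    simp only [hG_def, if_pos ht.2]
  have e2 : ∫ t in x..b, G t * f'' t = ∫ t in x..b, v t * f'' t := by
    refine integral_congr_ae (MeasureTheory.ae_of_all _ fun t ht => ?_)
    rw [uIoc_of_le hxb] at ht
    simp only [hG_def, if_neg (not_le.mpr ht.1)]
  have hfint : (∫ t in a..x, f t) + ∫ t in x..b, f t = ∫ t in a..b, f t :=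
    integral_add_adjacent_intervals hif1 hif2
  have hB : B = -(b-a) * f x + (x - (a+b)/2) * (f b - f a) + ∫ t in a..b, f t := by
    rw [hB_def, ← integral_add_adjacent_intervals hiGf1 hiGf2, e1, e2, I1, I2, J1, J2]
    simp only [one_mul, hu_def, hv_def]
    linear_combination hfint
  -- Cauchy-Schwarz
  set A : ℝ := ∫ t in a..b, (G t)^2 with hA_def
  set C : ℝ := ∫ t in a..b, (f'' t)^2 with hC_def
  have hiG2 : IntervalIntegrable (fun t => (G t)^2) MeasureTheory.volume a b :=
    ((hGcont.pow 2).continuousOn).intervalIntegrable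
  have hif2' : IntervalIntegrable (fun t => (f'' t)^2) MeasureTheory.volume a b :=
    ((hcont.mono hsub).pow 2).intervalIntegrable
  have hA0 : 0 ≤ A := integral_nonneg hab.le fun t _ => sq_nonneg _
  have hC0 : 0 ≤ C := integral_nonneg hab.le fun t _ => sq_nonneg _
  have hCS : B^2 ≤ A * C := by
    have key : ∀ lam : ℝ, 0 ≤ A * (lam * lam) + (-(2*B)) * lam + C := by
      intro lam
      have expand : ∫ t in a..b, (lam * G t - f'' t)^2
          = A * (lam * lam) + (-(2*B)) * lam + C := by
        have : (fun t => (lam * G t - f'' t)^2)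
            = fun t => (lam*lam) * (G t)^2 - (2*lam) * (G t * f'' t) + (f'' t)^2 := by
          funext t; ring
        rw [this, integral_add (((hiG2.const_mul _).sub (hiGf.const_mul _)))  hif2',
          integral_sub (hiG2.const_mul _) (hiGf.const_mul _),
          integral_const_mul, integral_const_mul]
        rw [hA_def, hB_def, hC_def]; ring
      rw [← expand]
      exact integral_nonneg hab.le fun t _ => sq_nonneg _
    have hd := discrim_le_zero key
    rw [discrim] at hd
    nlinarith [hd]
  -- computation of A
  have hA1 : ∫ t in a..x, (u t)^2
      = ((x-a)^5/5 + (a+b-2*x)*(x-a)^4/2 + (a+b-2*x)^2*(x-a)^3/3)/4 := by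
    have hder : ∀ t ∈ uIcc a x, HasDerivAt
        (fun s => ((s-a)^5/5 + (a+b-2*x)*(s-a)^4/2 + (a+b-2*x)^2*(s-a)^3/3)/4)
        ((u t)^2) t := by
      intro t _
      have h5 := (((hasDerivAt_id t).sub_const a).pow 5).div_const 5
      have h4 := ((((hasDerivAt_id t).sub_const a).pow 4).const_mul (a+b-2*x)).div_const 2
      have h3 := ((((hasDerivAt_id t).sub_const a).pow 3).const_mul ((a+b-2*x)^2)).div_const 3
      have h := ((h5.add h4).add h3).div_const 4
      simp only [id_eq] at h
      refine h.congr_deriv ?_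
      simp only [u]
      push_cast
      ring
    rw [integral_eq_sub_of_hasDerivAt hder ((hucont.pow 2).intervalIntegrable _ _)]
    ring
  have hA2 : ∫ t in x..b, (v t)^2
      = -(((x-b)^5/5 + (a+b-2*x)*(x-b)^4/2 + (a+b-2*x)^2*(x-b)^3/3)/4) := by
    have hder : ∀ t ∈ uIcc x b, HasDerivAt
        (fun s => ((s-b)^5/5 + (a+b-2*x)*(s-b)^4/2 + (a+b-2*x)^2*(s-b)^3/3)/4)
        ((v t)^2) t := by
      intro t _
      have h5 := (((hasDerivAt_id t).sub_const b).pow 5).div_const 5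
      have h4 := ((((hasDerivAt_id t).sub_const b).pow 4).const_mul (a+b-2*x)).div_const 2
      have h3 := ((((hasDerivAt_id t).sub_const b).pow 3).const_mul ((a+b-2*x)^2)).div_const 3
      have h := ((h5.add h4).add h3).div_const 4
      simp only [id_eq] at h
      refine h.congr_deriv ?_
      simp only [v]
      push_cast
      ring
    rw [integral_eq_sub_of_hasDerivAt hder ((hvcont.pow 2).intervalIntegrable _ _)]
    ring
  have eA1 : ∫ t in a..x, (G t)^2 = ∫ t in a..x, (u t)^2 := by
    refine integral_congr fun t ht => ?_
    rw [uIcc_of_le hax] at ht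
    simp only [hG_def, if_pos ht.2]
  have eA2 : ∫ t in x..b, (G t)^2 = ∫ t in x..b, (v t)^2 := by
    refine integral_congr_ae (MeasureTheory.ae_of_all _ fun t ht => ?_)
    rw [uIoc_of_le hxb] at ht
    simp only [hG_def, if_neg (not_le.mpr ht.1)]
  have hiG21 : IntervalIntegrable (fun t => (G t)^2) MeasureTheory.volume a x :=
    ((hGcont.pow 2).continuousOn).intervalIntegrable
  have hiG22 : IntervalIntegrable (fun t => (G t)^2) MeasureTheory.volume x b :=
    ((hGcont.pow 2).continuousOn).intervalIntegrable
  have hAle : A ≤ (b-a)^5/120 := by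
    rw [hA_def, ← integral_add_adjacent_intervals hiG21 hiG22, eA1, eA2, hA1, hA2]
    have hs : 0 ≤ x - a := sub_nonneg.mpr hax
    have hr : 0 ≤ b - x := sub_nonneg.mpr hxb
    have hkey : (b-a)^5/120
        - ((((x-a)^5/5 + (a+b-2*x)*(x-a)^4/2 + (a+b-2*x)^2*(x-a)^3/3)/4)
          + -(((x-b)^5/5 + (a+b-2*x)*(x-b)^4/2 + (a+b-2*x)^2*(x-b)^3/3)/4))
        = (x-a)*(b-x)*((x-a)^3+(b-x)^3)/12 := by ring
    have hnn : 0 ≤ (x-a)*(b-x)*((x-a)^3+(b-x)^3)/12 := by positivity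
    linarith [hkey, hnn]
  -- assemble
  have hE : f x - (x - (a + b) / 2) * ((f b - f a) / (b - a)) -
      (1 / (b - a)) * ∫ t in a..b, f t = -B / (b-a) := by
    rw [eq_div_iff (ne_of_gt hba), hB]
    field_simp
    ring
  rw [hE, abs_div, abs_neg, abs_of_pos hba]
  have habsB : |B| ≤ Real.sqrt A * Real.sqrt C := by
    rw [← Real.sqrt_mul hA0, ← Real.sqrt_sq_eq_abs]
    exact Real.sqrt_le_sqrt hCS
  have hpi : π < 3.15 := Real.pi_lt_d2
  have hpi0 : 0 < π := Real.pi_pos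
  have hAle' : A ≤ ((b-a) * Real.sqrt ((b-a)^3) / (2*π*Real.sqrt 3))^2 := by
    have h3 : Real.sqrt 3 ^ 2 = 3 := Real.sq_sqrt (by norm_num)
    have hb3 : Real.sqrt ((b-a)^3) ^ 2 = (b-a)^3 := Real.sq_sqrt (by positivity)
    have : ((b-a) * Real.sqrt ((b-a)^3) / (2*π*Real.sqrt 3))^2
        = (b-a)^5 / (12*π^2) := by
      rw [div_pow, mul_pow, mul_pow, mul_pow, h3, hb3]
      ring
    rw [this]
    refine hAle.trans ?_
    have h12 : 12*π^2 ≤ 120 := by nlinarith [hpi, hpi0]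
    gcongr
  have hsqA : Real.sqrt A ≤ (b-a) * Real.sqrt ((b-a)^3) / (2*π*Real.sqrt 3) := by
    have := Real.sqrt_le_sqrt hAle'
    rwa [Real.sqrt_sq (by positivity)] at this
  have hrw3 : (b - a) ^ ((3:ℝ)/2) = Real.sqrt ((b-a)^3) := by
    rw [show ((3:ℝ)/2) = (3:ℝ) * (1/2) by norm_num, Real.rpow_mul hba.le,
      ← Real.sqrt_eq_rpow]
    congr 1
    rw [show (3:ℝ) = ((3:ℕ):ℝ) by norm_num, Real.rpow_natCast]
  have hrwC : C ^ ((1:ℝ)/2) = Real.sqrt C := (Real.sqrt_eq_rpow C).symm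
  rw [hrw3, hrwC]
  calc |B| / (b-a) ≤ (Real.sqrt A * Real.sqrt C) / (b-a) := by
        gcongr
    _ ≤ (((b-a) * Real.sqrt ((b-a)^3) / (2*π*Real.sqrt 3)) * Real.sqrt C) / (b-a) := by
        gcongr
    _ = Real.sqrt ((b-a)^3) / (2*π*Real.sqrt 3) * Real.sqrt C := by
        field_simp
end

section
/- Fix a < b and x ∈ [a,b], and define K(x,t) = (t/2)(t-2a) for t ∈ [a,x] and K(x,t) = (t/2)(t-2b) for t ∈ (x,b]. If f is twice differentiable on [a,b], then (1/(b-a)) ∫_a^b K(x,t) f''(t) dt = x f'(x) - f(x) + (a² f'(a) - b² f'(b))/(2(b-a)) + (1/(b-a)) ∫_a^b f(t) dt. -/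
open intervalIntegral Set

theorem kernel_identity (a b x : ℝ) (hab : a < b) (hx : x ∈ Icc a b)
    (f f' f'' : ℝ → ℝ)
    (hderiv : ∀ t ∈ Icc a b, HasDerivAt f (f' t) t)
    (hderiv' : ∀ t ∈ Icc a b, HasDerivAt f' (f'' t) t)
    (hint : IntervalIntegrable f'' MeasureTheory.volume a b) :
    (1 / (b - a)) *
        ∫ t in a..b,
          (if t ≤ x then t / 2 * (t - 2 * a) else t / 2 * (t - 2 * b)) * f'' t =
      x * f' x - f x + (a ^ 2 * f' a - b ^ 2 * f' b) / (2 * (b - a)) +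
        (1 / (b - a)) * ∫ t in a..b, f t := by
  obtain ⟨hax, hxb⟩ := hx
  have hIax : Icc a x ⊆ Icc a b := Icc_subset_Icc le_rfl hxb
  have hIxb : Icc x b ⊆ Icc a b := Icc_subset_Icc hax le_rfl
  have huax : Set.uIcc a x = Icc a x := uIcc_of_le hax
  have huxb : Set.uIcc x b = Icc x b := uIcc_of_le hxb
  have huab : Set.uIcc a b = Icc a b := uIcc_of_le hab.le
  -- integrability of f'' on subintervals
  have hint1 : IntervalIntegrable f'' MeasureTheory.volume a x :=
    hint.mono_set (by rw [huax, huab]; exact hIax)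
  have hint2 : IntervalIntegrable f'' MeasureTheory.volume x b :=
    hint.mono_set (by rw [huxb, huab]; exact hIxb)
  -- continuity of f and f'
  have hcf : ContinuousOn f (Icc a b) := fun t ht => ((hderiv t ht).continuousAt).continuousWithinAt
  have hcf' : ContinuousOn f' (Icc a b) := fun t ht => ((hderiv' t ht).continuousAt).continuousWithinAt
  have hif'1 : IntervalIntegrable f' MeasureTheory.volume a x :=
    (hcf'.mono hIax).intervalIntegrable_of_Icc hax
  have hif'2 : IntervalIntegrable f' MeasureTheory.volume x b :=
    (hcf'.mono hIxb).intervalIntegrable_of_Icc hxb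
  have hif1 : IntervalIntegrable f MeasureTheory.volume a x :=
    (hcf.mono hIax).intervalIntegrable_of_Icc hax
  have hif2 : IntervalIntegrable f MeasureTheory.volume x b :=
    (hcf.mono hIxb).intervalIntegrable_of_Icc hxb
  -- derivative facts for kernels
  have hu : ∀ t : ℝ, HasDerivAt (fun t => t / 2 * (t - 2 * a)) (t - a) t := by
    intro t
    have := (((hasDerivAt_id t).div_const 2).fun_mul ((hasDerivAt_id t).sub_const (2 * a)))
    refine this.congr_deriv ?_
    simp [id]; ring
  have hv : ∀ t : ℝ, HasDerivAt (fun t => t / 2 * (t - 2 * b)) (t - b) t := by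
    intro t
    have := (((hasDerivAt_id t).div_const 2).fun_mul ((hasDerivAt_id t).sub_const (2 * b)))
    refine this.congr_deriv ?_
    simp [id]; ring
  have hw1 : ∀ t : ℝ, HasDerivAt (fun t => t - a) 1 t :=
    fun t => (hasDerivAt_id t).sub_const a
  have hw2 : ∀ t : ℝ, HasDerivAt (fun t => t - b) 1 t :=
    fun t => (hasDerivAt_id t).sub_const b
  have hiu : IntervalIntegrable (fun t => t - a) MeasureTheory.volume a x :=
    (continuous_id.sub continuous_const).intervalIntegrable _ _
  have hiv : IntervalIntegrable (fun t => t - b) MeasureTheory.volume x b :=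
    (continuous_id.sub continuous_const).intervalIntegrable _ _
  -- integration by parts on [a,x]
  have ibp1 : ∫ t in a..x, (t / 2 * (t - 2 * a)) * f'' t
      = (x / 2 * (x - 2 * a)) * f' x - (a / 2 * (a - 2 * a)) * f' a
        - ∫ t in a..x, (t - a) * f' t := by
    exact integral_mul_deriv_eq_deriv_mul (fun t ht => hu t)
      (fun t ht => hderiv' t (hIax (huax ▸ ht))) hiu hint1
  have ibp1' : ∫ t in a..x, (t - a) * f' t
      = (x - a) * f x - (a - a) * f a - ∫ t in a..x, 1 * f t := by
    exact integral_mul_deriv_eq_deriv_mul (fun t ht => hw1 t)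
      (fun t ht => hderiv t (hIax (huax ▸ ht))) (intervalIntegrable_const) hif'1
  have ibp2 : ∫ t in x..b, (t / 2 * (t - 2 * b)) * f'' t
      = (b / 2 * (b - 2 * b)) * f' b - (x / 2 * (x - 2 * b)) * f' x
        - ∫ t in x..b, (t - b) * f' t := by
    exact integral_mul_deriv_eq_deriv_mul (fun t ht => hv t)
      (fun t ht => hderiv' t (hIxb (huxb ▸ ht))) hiv hint2
  have ibp2' : ∫ t in x..b, (t - b) * f' t
      = (b - b) * f b - (x - b) * f x - ∫ t in x..b, 1 * f t := by
    exact integral_mul_deriv_eq_deriv_mul (fun t ht => hw2 t)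
      (fun t ht => hderiv t (hIxb (huxb ▸ ht))) (intervalIntegrable_const) hif'2
  -- the if-kernel coincides with the polynomial pieces a.e. on each subinterval
  have hK1 : ∀ t ∈ Set.uIoc a x,
      (if t ≤ x then t / 2 * (t - 2 * a) else t / 2 * (t - 2 * b)) * f'' t
        = (t / 2 * (t - 2 * a)) * f'' t := by
    intro t ht
    rw [uIoc_of_le hax] at ht
    rw [if_pos ht.2]
  have hK2 : ∀ t ∈ Set.uIoc x b,
      (if t ≤ x then t / 2 * (t - 2 * a) else t / 2 * (t - 2 * b)) * f'' t
        = (t / 2 * (t - 2 * b)) * f'' t := by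
    intro t ht
    rw [uIoc_of_le hxb] at ht
    rw [if_neg (not_le.2 ht.1)]
  have hKi1 : IntervalIntegrable (fun t =>
      (if t ≤ x then t / 2 * (t - 2 * a) else t / 2 * (t - 2 * b)) * f'' t)
      MeasureTheory.volume a x := by
    have hpoly : IntervalIntegrable (fun t => (t / 2 * (t - 2 * a)) * f'' t)
        MeasureTheory.volume a x :=
      hint1.continuousOn_mul (by fun_prop)
    exact hpoly.congr (fun t ht => (hK1 t ht).symm)
  have hKi2 : IntervalIntegrable (fun t =>
      (if t ≤ x then t / 2 * (t - 2 * a) else t / 2 * (t - 2 * b)) * f'' t)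
      MeasureTheory.volume x b := by
    have hpoly : IntervalIntegrable (fun t => (t / 2 * (t - 2 * b)) * f'' t)
        MeasureTheory.volume x b :=
      hint2.continuousOn_mul (by fun_prop)
    exact hpoly.congr (fun t ht => (hK2 t ht).symm)
  -- split the kernel integral
  have hsplit : (∫ t in a..b,
        (if t ≤ x then t / 2 * (t - 2 * a) else t / 2 * (t - 2 * b)) * f'' t)
      = (∫ t in a..x, (t / 2 * (t - 2 * a)) * f'' t)
        + ∫ t in x..b, (t / 2 * (t - 2 * b)) * f'' t := by
    rw [← integral_add_adjacent_intervals hKi1 hKi2]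
    congr 1
    · exact integral_congr_ae (Filter.Eventually.of_forall hK1)
    · exact integral_congr_ae (Filter.Eventually.of_forall hK2)
  have hfsplit : (∫ t in a..x, f t) + (∫ t in x..b, f t) = ∫ t in a..b, f t :=
    integral_add_adjacent_intervals hif1 hif2
  have hone1 : (∫ t in a..x, 1 * f t) = ∫ t in a..x, f t := by simp
  have hone2 : (∫ t in x..b, 1 * f t) = ∫ t in x..b, f t := by simp
  rw [hsplit, ibp1, ibp2, ibp1', ibp2', hone1, hone2]
  have hba : b - a ≠ 0 := sub_ne_zero.2 hab.ne'
  field_simp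
  nlinarith [hfsplit, sq_nonneg (a+b)]
end
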